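/- arXiv:2207.08678 — 2 statements merged into one kernel-verified Lean document; each statement's English description precedes it below -/
import Mathlib

section
/- If P is a closed walk in G of minimum total weight among all TSP tours (closed walks visiting all vertices), chosen among such tours to have the minimum number of hops, then for every ordered pair (u,v) of distinct vertices of the vertex cover C, the tour P contains at most one hop of the form (u, s, v) with s ∈ V \ C. -/
/-- The weight of a walk: the sum of the weights of its edges. -/
def walkWeight {V : Type*} {G : SimpleGraph V} (ω : Sym2 V → ℕ) {a b : V}
    (P : G.Walk a b) : ℕ :=
  (P.edges.map ω).sum

/-- The list of consecutive triples of a list. -/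
def triples {V : Type*} (l : List V) : List (V × V × V) :=
  l.zip (l.tail.zip l.tail.tail)

/-- The number of hops of a walk with respect to a vertex cover `C`: the number of
length-2 subwalks `(u, s, v)` with `s ∉ C` and `u ≠ v`. -/
def numHops {V : Type*} [DecidableEq V] (C : Set V) [DecidablePred (· ∈ C)]
    {G : SimpleGraph V} {a b : V} (P : G.Walk a b) : ℕ :=
  ((triples P.support).filter (fun t => t.2.1 ∉ C ∧ t.1 ≠ t.2.2)).length

namespace HopAux

theorem getElem_idx_eq {α : Type*} (l : List α) {i j : ℕ} (h : i = j) (hj : j < l.length) :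
    l[i]'(h ▸ hj) = l[j] := by subst h; rfl

theorem triples_length {V : Type*} (l : List V) : (triples l).length = l.length - 2 := by
  simp [triples]; omega

theorem getElem_triples {V : Type*} (l : List V) (i : ℕ) (h : i < (triples l).length) :
    (triples l)[i] =
      (l[i]'(by rw [triples_length] at h; omega),
       l[i+1]'(by rw [triples_length] at h; omega),
       l[i+2]'(by rw [triples_length] at h; omega)) := by
  have h' := h
  rw [triples_length] at h'
  simp only [triples, List.getElem_zip, List.getElem_tail]

theorem triples_reverse {V : Type*} (l : List V) :
    triples l.reverse = ((triples l).map (fun t => (t.2.2, t.2.1, t.1))).reverse := by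
  apply List.ext_getElem
  · simp [triples_length]
  · intro i h1 h2
    have hl : i < l.length - 2 := by rw [triples_length, List.length_reverse] at h1; omega
    simp only [getElem_triples, List.getElem_reverse, List.getElem_map,
      triples_length, List.length_reverse, List.length_map]
    refine congrArg₂ _ ?_ (congrArg₂ _ ?_ ?_) <;>
      · apply getElem_idx_eq l
        omega

section HopCount
variable {V : Type*} [DecidableEq V] (C : Set V) [DecidablePred (· ∈ C)]

def hopCount (l : List V) : ℕ :=
  ((triples l).filter (fun t => t.2.1 ∉ C ∧ t.1 ≠ t.2.2)).length

def hopIf (a b c : V) : ℕ := if b ∉ C ∧ a ≠ c then 1 else 0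

theorem hopCount_nil : hopCount C ([] : List V) = 0 := rfl
theorem hopCount_single (a : V) : hopCount C [a] = 0 := rfl
theorem hopCount_pair (a b : V) : hopCount C [a, b] = 0 := rfl

omit [DecidableEq V] in
theorem triples_cons₃ (a b c : V) (t : List V) :
    triples (a::b::c::t) = (a,b,c) :: triples (b::c::t) := by
  simp [triples]

theorem hopCount_cons₃ (a b c : V) (t : List V) :
    hopCount C (a::b::c::t) = hopIf C a b c + hopCount C (b::c::t) := by
  simp only [hopCount, hopIf, triples_cons₃, List.filter_cons]
  split <;> simp_all <;> omega

theorem hopIf_comm (a b c : V) : hopIf C a b c = hopIf C c b a := by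
  simp [hopIf, ne_comm]

theorem hopIf_mem_left (a b c : V) (h : b ∈ C) : hopIf C a b c = 0 := by
  simp [hopIf, h]

theorem hopIf_eq_ends (a b : V) : hopIf C a b a = 0 := by
  simp [hopIf]

theorem hopIf_hop (a b c : V) (h1 : b ∉ C) (h2 : a ≠ c) : hopIf C a b c = 1 := by
  simp [hopIf, h1, h2]

/-- cut a list at an element of `C`. -/
theorem hopCount_cut {c : V} (hc : c ∈ C) : ∀ (xs ys : List V),
    hopCount C (xs ++ c :: ys) = hopCount C (xs ++ [c]) + hopCount C (c :: ys)
  | [], ys => by simp [hopCount_single]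
  | [x], ys => by
      cases ys with
      | nil => simp [hopCount_pair, hopCount_single]
      | cons y ys =>
          simp only [List.cons_append, List.nil_append, hopCount_cons₃,
            hopCount_pair, hopIf_mem_left _ _ _ _ hc]
  | x₁::x₂::xs, ys => by
      have IH := hopCount_cut hc (x₂::xs) ys
      cases xs with
      | nil =>
          simp only [List.cons_append, List.nil_append, hopCount_cons₃,
            hopCount_pair] at *
          omega
      | cons x₃ xs =>
          simp only [List.cons_append, hopCount_cons₃] at *
          omega

theorem hopCount_reverse (l : List V) : hopCount C l.reverse = hopCount C l := by
  rw [hopCount, triples_reverse, List.filter_reverse, List.length_reverse,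
    List.filter_map, List.length_map, hopCount]
  congr 1
  apply List.filter_congr
  intro t _
  simp [Function.comp, ne_comm, and_comm]

end HopCount

theorem exists_two_of_two_le_filter {α : Type*} (p : α → Bool) :
    ∀ (l : List α), 2 ≤ (l.filter p).length →
      ∃ (l₁ l₂ l₃ : List α) (x y : α),
        l = l₁ ++ x :: l₂ ++ y :: l₃ ∧ p x ∧ p y
  | [], h => by simp at h
  | a :: t, h => by
    by_cases hp : p a
    · have h1 : 1 ≤ (t.filter p).length := by
        rw [List.filter_cons, if_pos hp] at h; simp at h; omega
      obtain ⟨y, hy⟩ : ∃ y ∈ t.filter p, True := by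
        cases hf : t.filter p with
        | nil => rw [hf] at h1; simp at h1
        | cons b l => exact ⟨b, by simp [hf], trivial⟩
      have hyp : p y ∧ y ∈ t := by
        have := List.mem_filter.mp hy.1; exact ⟨this.2, this.1⟩
      obtain ⟨s, t', rfl⟩ := List.append_of_mem hyp.2
      exact ⟨[], s, t', a, y, by simp, hp, hyp.1⟩
    · rw [List.filter_cons, if_neg hp] at h
      obtain ⟨l₁, l₂, l₃, x, y, rfl, hx, hy⟩ := exists_two_of_two_le_filter p t h
      exact ⟨a :: l₁, l₂, l₃, x, y, by simp, hx, hy⟩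

theorem two_positions {α : Type*} (p : α → Bool) (l : List α)
    (h : 2 ≤ (l.filter p).length) :
    ∃ (i j : ℕ) (x y : α), i < j ∧ l[i]? = some x ∧ l[j]? = some y ∧ p x ∧ p y := by
  obtain ⟨l₁, l₂, l₃, x, y, rfl, hx, hy⟩ := exists_two_of_two_le_filter p l h
  refine ⟨l₁.length, l₁.length + 1 + l₂.length, x, y, by omega, ?_, ?_, hx, hy⟩
  · rw [List.append_assoc, List.getElem?_append_right (le_refl l₁.length)]
    simp
  · rw [List.getElem?_append_right
        (by simp; omega : (l₁ ++ x :: l₂).length ≤ l₁.length + 1 + l₂.length),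
      show l₁.length + 1 + l₂.length - (l₁ ++ x :: l₂).length = 0 by simp; omega]
    simp

theorem list_decomp {V : Type*} (S : List V) (i j : ℕ) (hij : i + 3 ≤ j)
    (hj : j + 2 < S.length)
    (u s₁ v s₂ : V)
    (h1 : S[i]? = some u) (h2 : S[i+1]? = some s₁) (h3 : S[i+2]? = some v)
    (h4 : S[j]? = some u) (h5 : S[j+1]? = some s₂) (h6 : S[j+2]? = some v) :
    S = S.take i ++ u :: s₁ :: v ::
        ((S.drop (i+3)).take (j-(i+3)) ++ u :: s₂ :: v :: S.drop (j+3)) := by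
  have e1 : S.drop i = u :: s₁ :: v :: S.drop (i+3) := by
    rw [List.drop_eq_getElem_cons (by omega), List.drop_eq_getElem_cons (by omega),
      List.drop_eq_getElem_cons (by omega)]
    have g1 : S[i] = u := by simpa using (List.getElem?_eq_some_iff.mp h1).2
    have g2 : S[i+1] = s₁ := by simpa using (List.getElem?_eq_some_iff.mp h2).2
    have g3 : S[i+2] = v := by simpa using (List.getElem?_eq_some_iff.mp h3).2
    simp only [show i+1+1 = i+2 from rfl, show i+2+1 = i+3 from rfl, g1, g2, g3]
  have e2 : S.drop j = u :: s₂ :: v :: S.drop (j+3) := by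
    rw [List.drop_eq_getElem_cons (by omega), List.drop_eq_getElem_cons (by omega),
      List.drop_eq_getElem_cons (by omega)]
    have g1 : S[j] = u := by simpa using (List.getElem?_eq_some_iff.mp h4).2
    have g2 : S[j+1] = s₂ := by simpa using (List.getElem?_eq_some_iff.mp h5).2
    have g3 : S[j+2] = v := by simpa using (List.getElem?_eq_some_iff.mp h6).2
    simp only [show j+1+1 = j+2 from rfl, show j+2+1 = j+3 from rfl, g1, g2, g3]
  have e3 : S.drop (i+3) = (S.drop (i+3)).take (j-(i+3)) ++ S.drop j := by
    have := List.take_append_drop (j-(i+3)) (S.drop (i+3))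
    rw [List.drop_drop, show i+3+(j-(i+3)) = j from by omega] at this
    exact this.symm
  conv_lhs => rw [← List.take_append_drop i S, e1, e3, e2]

section WalkLemmas
variable {V : Type*} {G : SimpleGraph V}

/-- split a walk at a given occurrence of a vertex in its support -/
theorem walk_split {a b : V} (P : G.Walk a b) :
    ∀ (xs : List V) (u : V) (ys : List V), P.support = xs ++ u :: ys →
    ∃ (P₁ : G.Walk a u) (P₂ : G.Walk u b), P = P₁.append P₂ ∧
      P₁.support = xs ++ [u] ∧ P₂.support = u :: ys := by
  induction P with
  | nil =>
    intro xs u ys h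
    rw [SimpleGraph.Walk.support_nil] at h
    cases xs with
    | nil =>
      simp only [List.nil_append, List.cons.injEq] at h
      obtain ⟨rfl, h2⟩ := h
      have : ys = [] := by simpa using h2.symm
      subst this
      exact ⟨.nil, .nil, rfl, rfl, rfl⟩
    | cons hd tl => simp at h
  | cons hadj p ih =>
    intro xs u ys h
    rw [SimpleGraph.Walk.support_cons] at h
    cases xs with
    | nil =>
      simp only [List.nil_append, List.cons.injEq] at h
      obtain ⟨rfl, rfl⟩ := h
      exact ⟨.nil, .cons hadj p, rfl, rfl, by simp⟩
    | cons x xs' =>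
      simp only [List.cons_append, List.cons.injEq] at h
      obtain ⟨rfl, h2⟩ := h
      obtain ⟨P₁, P₂, rfl, hs1, hs2⟩ := ih xs' u ys h2
      exact ⟨.cons hadj P₁, P₂, rfl, by simp [hs1], hs2⟩

/-- peel an edge off a walk with known support head -/
theorem walk_peel {u b : V} (P : G.Walk u b) (s : V) (ys : List V)
    (h : P.support = u :: s :: ys) :
    ∃ (hadj : G.Adj u s) (P' : G.Walk s b),
      P = SimpleGraph.Walk.cons hadj P' ∧ P'.support = s :: ys := by
  cases P with
  | nil => simp at h
  | @cons _ w _ hadj p =>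
    rw [SimpleGraph.Walk.support_cons] at h
    simp only [List.cons.injEq] at h
    have hw : w = s := by
      have := h.2
      rw [SimpleGraph.Walk.support_eq_cons p] at this
      exact (List.cons.injEq .. ▸ this).1
    subst hw
    exact ⟨hadj, p, rfl, h.2⟩

end WalkLemmas

section Weight
variable {V : Type*} {G : SimpleGraph V} (ω : Sym2 V → ℕ)

theorem walkWeight_append {a b c : V} (p : G.Walk a b) (q : G.Walk b c) :
    walkWeight ω (p.append q) = walkWeight ω p + walkWeight ω q := by
  simp [walkWeight, SimpleGraph.Walk.edges_append]

theorem walkWeight_cons {a b c : V} (h : G.Adj a b) (p : G.Walk b c) :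
    walkWeight ω (SimpleGraph.Walk.cons h p) = ω s(a, b) + walkWeight ω p := by
  simp [walkWeight]

theorem walkWeight_reverse {a b : V} (p : G.Walk a b) :
    walkWeight ω p.reverse = walkWeight ω p := by
  simp [walkWeight, SimpleGraph.Walk.edges_reverse, List.sum_reverse]

theorem walkWeight_nil {a : V} :
    walkWeight ω (SimpleGraph.Walk.nil : G.Walk a a) = 0 := rfl

end Weight

end HopAux

open HopAux SimpleGraph Walk in
set_option maxHeartbeats 1000000 in
/-- If `P` is a TSP tour (a closed walk visiting all vertices) of minimum weight,
chosen among minimum-weight tours to have the minimum number of hops, then for every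
ordered pair `(u, v)` of distinct vertices of the vertex cover `C`, the tour `P`
contains at most one hop of the form `(u, s, v)` with `s ∉ C`. -/
theorem optimal_tour_one_hop_per_pair {V : Type*} [Fintype V] [DecidableEq V]
    (G : SimpleGraph V) (hconn : G.Connected) (ω : Sym2 V → ℕ)
    (C : Set V) [DecidablePred (· ∈ C)]
    (hC : ∀ x y : V, G.Adj x y → x ∈ C ∨ y ∈ C)
    (a : V) (P : G.Walk a a) (hPtour : ∀ v : V, v ∈ P.support)
    (hPopt : ∀ (b : V) (Q : G.Walk b b), (∀ v : V, v ∈ Q.support) →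
      walkWeight ω P ≤ walkWeight ω Q)
    (hPhops : ∀ (b : V) (Q : G.Walk b b), (∀ v : V, v ∈ Q.support) →
      walkWeight ω Q = walkWeight ω P → numHops C P ≤ numHops C Q) :
    ∀ u v : V, u ∈ C → v ∈ C → u ≠ v →
      ((triples P.support).filter
        (fun t => t.1 = u ∧ t.2.2 = v ∧ t.2.1 ∉ C)).length ≤ 1 := by
  intro u v hu hv huv
  by_contra hcon
  push_neg at hcon
  -- two positions i < j in the triples list
  obtain ⟨i, j, x, y, hij, hxi, hyj, hx, hy⟩ :=
    two_positions _ (triples P.support) hcon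
  simp only [decide_eq_true_eq] at hx hy
  obtain ⟨hx1, hx3, hx2⟩ := hx
  obtain ⟨hy1, hy3, hy2⟩ := hy
  set s₁ := x.2.1 with hs₁
  set s₂ := y.2.1 with hs₂
  obtain ⟨hilt, hig⟩ := List.getElem?_eq_some_iff.mp hxi
  obtain ⟨hjlt, hjg⟩ := List.getElem?_eq_some_iff.mp hyj
  rw [getElem_triples] at hig hjg
  have hilen := hilt; rw [triples_length] at hilen
  have hjlen := hjlt; rw [triples_length] at hjlen
  -- getElem facts on the support
  have Si0 : P.support[i]'(by omega) = u := by rw [← hx1, ← hig]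
  have Si1 : P.support[i+1]'(by omega) = s₁ := by rw [hs₁, ← hig]
  have Si2 : P.support[i+2]'(by omega) = v := by rw [← hx3, ← hig]
  have Sj0 : P.support[j]'(by omega) = u := by rw [← hy1, ← hjg]
  have Sj1 : P.support[j+1]'(by omega) = s₂ := by rw [hs₂, ← hjg]
  have Sj2 : P.support[j+2]'(by omega) = v := by rw [← hy3, ← hjg]
  -- j ≥ i + 3
  have hij3 : i + 3 ≤ j := by
    rcases Nat.lt_or_ge j (i+3) with hlt | hge
    · have hcases : j = i+1 ∨ j = i+2 := by omega
      rcases hcases with rfl | rfl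
      · exfalso
        have : s₁ = u := by rw [← Si1, ← Sj0]
        rw [this] at hx2; exact hx2 hu
      · exfalso
        have : u = v := by rw [← Sj0, Si2]
        exact huv this
    · exact hge
  -- decompose the support
  have hS := list_decomp P.support i j hij3 (by omega) u s₁ v s₂
    (List.getElem?_eq_some_iff.mpr ⟨by omega, Si0⟩)
    (List.getElem?_eq_some_iff.mpr ⟨by omega, Si1⟩)
    (List.getElem?_eq_some_iff.mpr ⟨by omega, Si2⟩)
    (List.getElem?_eq_some_iff.mpr ⟨by omega, Sj0⟩)
    (List.getElem?_eq_some_iff.mpr ⟨by omega, Sj1⟩)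
    (List.getElem?_eq_some_iff.mpr ⟨by omega, Sj2⟩)
  set l₀ := P.support.take i with hl₀
  set m := (P.support.drop (i+3)).take (j-(i+3)) with hm
  set d := P.support.drop (j+3) with hd
  -- split the walk
  obtain ⟨A, R, hPA, hA, hR⟩ := walk_split P l₀ u (s₁ :: v :: (m ++ u :: s₂ :: v :: d)) hS
  obtain ⟨hadj₁, R₁, hReq, hR₁⟩ := walk_peel R s₁ _ hR
  obtain ⟨hadj₂, R₂, hR₁eq, hR₂⟩ := walk_peel R₁ v _ hR₁
  obtain ⟨B, R₃, hR₂eq, hB, hR₃⟩ := walk_split R₂ (v::m) u (s₂::v::d) (by rw [hR₂]; simp)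
  obtain ⟨hadj₃, R₄, hR₃eq, hR₄⟩ := walk_peel R₃ s₂ _ hR₃
  obtain ⟨hadj₄, D, hR₄eq, hD⟩ := walk_peel R₄ v _ hR₄
  have hs₁C : s₁ ∉ C := hx2
  have hs₂C : s₂ ∉ C := hy2
  -- weight of P
  have hwP : walkWeight ω P = walkWeight ω A + ω s(u,s₁) + ω s(s₁,v)
      + walkWeight ω B + ω s(u,s₂) + ω s(s₂,v) + walkWeight ω D := by
    rw [hPA, hReq, hR₁eq, hR₂eq, hR₃eq, hR₄eq]
    simp [walkWeight_append, walkWeight_cons]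
    ring
  -- hop count of P
  have hPhop : numHops C P = hopCount C (l₀ ++ [u]) + (1 + (hopCount C ((v::m) ++ [u])
      + (1 + hopCount C (v::d)))) := by
    show hopCount C P.support = _
    rw [hS, hopCount_cut C hu l₀,
      show (u :: s₁ :: v :: (m ++ u :: s₂ :: v :: d) : List V)
        = [u,s₁] ++ v :: (m ++ u :: s₂ :: v :: d) from rfl,
      hopCount_cut C hv [u,s₁],
      show (v :: (m ++ u :: s₂ :: v :: d) : List V) = (v::m) ++ u :: (s₂::v::d) from by simp,
      hopCount_cut C hu (v::m),
      show (u :: s₂ :: v :: d : List V) = [u,s₂] ++ v :: d from rfl,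
      hopCount_cut C hv [u,s₂]]
    rw [show ([u,s₁] ++ [v] : List V) = [u,s₁,v] from rfl,
      show ([u,s₂] ++ [v] : List V) = [u,s₂,v] from rfl,
      hopCount_cons₃, hopCount_cons₃, hopCount_pair, hopCount_pair,
      hopIf_hop C u s₁ v hs₁C huv, hopIf_hop C u s₂ v hs₂C huv]
  -- the key step: an alternative tour
  have key : ∀ (xx yy : V) (hux : G.Adj u xx) (hvy : G.Adj v yy),
      (xx = s₁ ∧ yy = s₂ ∨ xx = s₂ ∧ yy = s₁) →
      2 * ω s(u,xx) + 2 * ω s(v,yy)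
        ≤ ω s(u,s₁) + ω s(s₁,v) + ω s(u,s₂) + ω s(s₂,v) →
      False := by
    intro xx yy hux hvy hperm hwle
    set Q : G.Walk a a := A.append
      ((Walk.cons hux (Walk.cons hux.symm B.reverse)).append
        (Walk.cons hvy (Walk.cons hvy.symm D))) with hQdef
    have hsQ : Q.support = l₀ ++ u :: xx :: u :: (m.reverse ++ v :: yy :: v :: d) := by
      rw [hQdef]
      simp [Walk.support_append, Walk.support_cons, Walk.support_reverse, hA, hB, hD]
    have hcov : ∀ w : V, w ∈ Q.support := by
      intro w
      have hw := hPtour w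
      rw [hS] at hw
      rw [hsQ]
      simp only [List.mem_append, List.mem_cons, List.mem_reverse] at hw ⊢
      rcases hperm with ⟨rfl, rfl⟩ | ⟨rfl, rfl⟩ <;>
        rcases hw with h | h | h | h | h | h | h | h <;> simp [h]
    have sw1 : (s(xx,u) : Sym2 V) = s(u,xx) := Sym2.eq_swap
    have sw2 : (s(yy,v) : Sym2 V) = s(v,yy) := Sym2.eq_swap
    have hwQ : walkWeight ω Q = walkWeight ω A + 2 * ω s(u,xx) + walkWeight ω B
        + 2 * ω s(v,yy) + walkWeight ω D := by
      rw [hQdef]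
      simp [walkWeight_append, walkWeight_cons, walkWeight_reverse, sw1, sw2]
      ring
    have h1 : walkWeight ω Q ≤ walkWeight ω P := by rw [hwQ, hwP]; omega
    have heq : walkWeight ω Q = walkWeight ω P := le_antisymm h1 (hPopt a Q hcov)
    have h3 := hPhops a Q hcov heq
    have hQhop : numHops C Q = hopCount C (l₀ ++ [u])
        + (hopCount C ((u::m.reverse) ++ [v]) + hopCount C (v::d)) := by
      show hopCount C Q.support = _
      rw [hsQ, hopCount_cut C hu l₀,
        show (u :: xx :: u :: (m.reverse ++ v :: yy :: v :: d) : List V)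
          = [u,xx] ++ u :: (m.reverse ++ v :: yy :: v :: d) from rfl,
        hopCount_cut C hu [u,xx],
        show (u :: (m.reverse ++ v :: yy :: v :: d) : List V)
          = (u::m.reverse) ++ v :: (yy::v::d) from by simp,
        hopCount_cut C hv (u::m.reverse),
        show (v :: yy :: v :: d : List V) = [v,yy] ++ v :: d from rfl,
        hopCount_cut C hv [v,yy]]
      rw [show ([u,xx] ++ [u] : List V) = [u,xx,u] from rfl,
        show ([v,yy] ++ [v] : List V) = [v,yy,v] from rfl,
        hopCount_cons₃, hopCount_cons₃, hopCount_pair, hopCount_pair,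
        hopIf_eq_ends, hopIf_eq_ends]
      omega
    have hrev : hopCount C ((u::m.reverse) ++ [v]) = hopCount C ((v::m) ++ [u]) := by
      rw [← hopCount_reverse C ((v::m) ++ [u])]
      congr 1
      simp
    omega
  -- choose the cheaper of the two alternatives
  rcases le_or_gt (ω s(u,s₁) + ω s(s₂,v)) (ω s(u,s₂) + ω s(s₁,v)) with hc | hc
  · refine key s₁ s₂ hadj₁ hadj₄.symm (Or.inl ⟨rfl, rfl⟩) ?_
    have sw : (s(v,s₂) : Sym2 V) = s(s₂,v) := Sym2.eq_swap
    rw [sw]; omega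
  · refine key s₂ s₁ hadj₃ hadj₂.symm (Or.inr ⟨rfl, rfl⟩) ?_
    have sw : (s(v,s₁) : Sym2 V) = s(s₁,v) := Sym2.eq_swap
    rw [sw]; omega
end

section
/- Let G be a connected edge-weighted graph, C a vertex cover, and G' the induced subgraph on C ∪ S for some S ⊆ V \ C, where every vertex s ∈ V \ (C ∪ S) has at least one neighbor. If OPT denotes the minimum weight of a TSP tour for G' and OPT' ≤ OPT is attained, then G has a TSP tour of weight OPT' + 2·Σ_{s ∈ V \ (C ∪ S)} ω_min(s), where ω_min(s) = min_{w ∈ N(s)} ω({s,w}). -/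
/-- Inclusion homomorphism from an induced subgraph to the ambient graph. -/
def inclHom {V : Type*} (G : SimpleGraph V) (s : Set V) : G.induce s →g G where
  toFun := Subtype.val
  map_rel' := fun h => h

lemma insert_detour {V : Type*} [DecidableEq V] {G : SimpleGraph V} (ω : Sym2 V → ℕ) {b s w : V}
    (h : G.Adj s w) (Q : G.Walk b b) (hw : w ∈ Q.support) :
    ∃ R : G.Walk b b, (∀ v ∈ Q.support, v ∈ R.support) ∧ s ∈ R.support ∧
      walkWeight ω R = walkWeight ω Q + 2 * ω s(s, w) := by
  refine ⟨(Q.takeUntil w hw).append (SimpleGraph.Walk.cons h.symm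
    (SimpleGraph.Walk.cons h (Q.dropUntil w hw))), ?_, ?_, ?_⟩
  · intro v hv
    rw [← Q.take_spec hw, SimpleGraph.Walk.mem_support_append_iff] at hv
    rw [SimpleGraph.Walk.mem_support_append_iff]
    rcases hv with hv | hv
    · exact Or.inl hv
    · right; simp [hv]
  · rw [SimpleGraph.Walk.mem_support_append_iff]; right; simp
  · have hQ : walkWeight ω Q
        = walkWeight ω (Q.takeUntil w hw) + walkWeight ω (Q.dropUntil w hw) := by
      rw [walkWeight, walkWeight, walkWeight, ← List.sum_append, ← List.map_append,
        ← SimpleGraph.Walk.edges_append, Q.take_spec hw]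
    simp [walkWeight, SimpleGraph.Walk.edges_append] at hQ ⊢
    have : s(w, s) = s(s, w) := Sym2.eq_swap
    rw [this]
    omega

/-- Let `C` be a vertex cover of a connected graph `G`, `S ⊆ V \ C`, and
`G' = G[C ∪ S]` the induced subgraph.  Suppose every deleted vertex
`s ∈ V \ (C ∪ S)` has a neighbor, and let `ωmin s` be the minimum weight of an edge
incident to `s`.  If `G'` has a TSP tour of weight `OPT'`, then `G` has a TSP tour of
weight `OPT' + 2 · Σ_{s ∈ V \ (C ∪ S)} ωmin s`. -/
theorem lift_tour {V : Type*} [Fintype V] [DecidableEq V]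
    (G : SimpleGraph V) (hconn : G.Connected) (ω : Sym2 V → ℕ)
    (C S : Finset V)
    (hC : ∀ u v : V, G.Adj u v → u ∈ C ∨ v ∈ C)
    (hSC : ∀ s ∈ S, s ∉ C)
    (ωmin : V → ℕ)
    (hmin : ∀ s : V, s ∉ C → s ∉ S →
      (∃ w : V, G.Adj s w ∧ ω s(s, w) = ωmin s) ∧
      (∀ w : V, G.Adj s w → ωmin s ≤ ω s(s, w)))
    (OPT' : ℕ)
    (a' : ↑((C ∪ S : Finset V) : Set V))
    (P' : (G.induce ((C ∪ S : Finset V) : Set V)).Walk a' a')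
    (hP'tour : ∀ v : ↑((C ∪ S : Finset V) : Set V), v ∈ P'.support)
    (hP'weight : (P'.edges.map (fun e => ω (e.map Subtype.val))).sum = OPT') :
    ∃ (b : V) (P : G.Walk b b), (∀ v : V, v ∈ P.support) ∧
      walkWeight ω P = OPT' + 2 * ∑ s ∈ (C ∪ S)ᶜ, ωmin s := by
  classical
  set P : G.Walk (a' : V) (a' : V) := P'.map (inclHom G _) with hP
  have hPsupp : ∀ v ∈ C ∪ S, v ∈ P.support := by
    intro v hv
    change v ∈ (P'.map (inclHom G _)).support
    rw [SimpleGraph.Walk.support_map, List.mem_map]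
    exact ⟨⟨v, by simpa using hv⟩, hP'tour _, rfl⟩
  have hPweight : walkWeight ω P = OPT' := by
    change walkWeight ω (P'.map (inclHom G _)) = OPT'
    rw [walkWeight, SimpleGraph.Walk.edges_map, List.map_map, ← hP'weight]
    rfl
  -- induction over subsets T of (C ∪ S)ᶜ
  have key : ∀ T : Finset V, T ⊆ (C ∪ S)ᶜ →
      ∃ Q : G.Walk (a' : V) (a' : V),
        (∀ v ∈ C ∪ S, v ∈ Q.support) ∧ (∀ v ∈ T, v ∈ Q.support) ∧
        walkWeight ω Q = OPT' + 2 * ∑ s ∈ T, ωmin s := by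
    intro T
    induction T using Finset.induction with
    | empty => exact fun _ => ⟨P, hPsupp, by simp, by simp [hPweight]⟩
    | @insert s T hs ih =>
      intro hsub
      obtain ⟨Q, hQ1, hQ2, hQ3⟩ := ih (fun x hx => hsub (Finset.mem_insert_of_mem hx))
      have hsmem : s ∈ (C ∪ S)ᶜ := hsub (Finset.mem_insert_self s T)
      rw [Finset.mem_compl, Finset.mem_union] at hsmem
      push_neg at hsmem
      obtain ⟨⟨w, hadj, hωw⟩, -⟩ := hmin s hsmem.1 hsmem.2
      have hwC : w ∈ C := by
        rcases hC s w hadj with h | h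
        · exact absurd h hsmem.1
        · exact h
      have hwQ : w ∈ Q.support := hQ1 w (Finset.mem_union_left _ hwC)
      obtain ⟨R, hR1, hR2, hR3⟩ := insert_detour ω hadj Q hwQ
      refine ⟨R, fun v hv => hR1 v (hQ1 v hv), ?_, ?_⟩
      · intro v hv
        rcases Finset.mem_insert.mp hv with rfl | hv
        · exact hR2
        · exact hR1 v (hQ2 v hv)
      · rw [hR3, hQ3, hωw, Finset.sum_insert hs]; ring
  obtain ⟨Q, hQ1, hQ2, hQ3⟩ := key (C ∪ S)ᶜ le_rfl
  refine ⟨a', Q, fun v => ?_, hQ3⟩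
  by_cases hv : v ∈ C ∪ S
  · exact hQ1 v hv
  · exact hQ2 v (Finset.mem_compl.mpr hv)
end
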